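/- arXiv:2412.15281 — 2 statements merged into one kernel-verified Lean document; each statement's English description precedes it below -/
import Mathlib

section
/- Let G be a countably infinite amenable group and T a finite tiling of G. Then for every ε > 0 there exist δ > 0 and a nonempty finite subset K of G such that for every g ∈ G and every (K, δ)-invariant nonempty finite subset F of G, the union of those Tg-tiles that are contained in F has proportion larger than 1 − ε in F; that is, |⋃{T' ∈ Tg : T' ⊆ F}| / |F| > 1 − ε, where Tg = {T'g : T' ∈ T}. -/
open Filter Set
open scoped ENNReal

noncomputable section

/-! ### Basic combinatorial operations on finsets (with classical decidability) -/

/-- Symmetric difference of two finsets. -/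
noncomputable def finsetSymmDiff {G : Type*} (A B : Finset G) : Finset G :=
  letI : DecidableEq G := Classical.decEq G
  (A \ B) ∪ (B \ A)

/-- Left translate `gF = {g*f : f ∈ F}` of a finset. -/
noncomputable def finsetLMul {G : Type*} [Group G] (g : G) (F : Finset G) : Finset G :=
  letI : DecidableEq G := Classical.decEq G
  F.image (fun x => g * x)

/-- Pointwise product `TF = {t*f : t ∈ T, f ∈ F}` of finsets. -/
noncomputable def finsetMul {G : Type*} [Group G] (T F : Finset G) : Finset G :=
  letI : DecidableEq G := Classical.decEq G
  Finset.image₂ (· * ·) T F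

/-! ### Følner sequences and amenability -/

/-- `F` is a Følner sequence of `G`: a sequence of nonempty finite subsets with
`|F n △ g F n| / |F n| → 0` for every `g ∈ G`. -/
def IsFolnerSeq {G : Type*} [Group G] (F : ℕ → Finset G) : Prop :=
  (∀ n, (F n).Nonempty) ∧
    ∀ g : G, Filter.Tendsto
      (fun n => ((finsetSymmDiff (F n) (finsetLMul g (F n))).card : ℝ) / ((F n).card : ℝ))
      Filter.atTop (nhds 0)

/-- A countable group is amenable if it admits a Følner sequence. -/
def IsAmenable (G : Type*) [Group G] : Prop := ∃ F : ℕ → Finset G, IsFolnerSeq F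

/-- A subset `S ⊆ G` is syndetic if `G = F S` for some finite `F`. -/
def IsSyndetic {G : Type*} [Group G] (S : Set G) : Prop :=
  ∃ F : Finset G, ∀ g : G, ∃ f ∈ F, ∃ s ∈ S, g = f * s

/-- `B(F,T) = {g ∈ G : Tg ∩ F ≠ ∅ and Tg ∩ (G∖F) ≠ ∅}`. -/
def folnerBoundary {G : Type*} [Group G] (T F : Finset G) : Set G :=
  {g : G | (∃ t ∈ T, t * g ∈ F) ∧ (∃ t ∈ T, t * g ∉ F)}

/-- `F` is `(T,ε)`-invariant if `|B(F,T)| / |F| < ε`. -/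
def IsTInvariant {G : Type*} [Group G] (T : Finset G) (ε : ℝ) (F : Finset G) : Prop :=
  ((folnerBoundary T F).ncard : ℝ) / (F.card : ℝ) < ε

/-! ### Tilings -/

/-- The right translate `Sc = {s*c : s ∈ S}` of a set `S ⊆ G`. -/
def tileTranslate {G : Type*} [Group G] (S : Set G) (c : G) : Set G := (fun s => s * c) '' S

/-- A tiling of `G` is a collection of pairwise disjoint nonempty finite subsets covering `G`. -/
def IsTiling {G : Type*} [Group G] (T : Set (Set G)) : Prop :=
  (∀ t ∈ T, t.Finite ∧ t.Nonempty) ∧ ⋃₀ T = Set.univ ∧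
    ∀ t ∈ T, ∀ t' ∈ T, t ≠ t' → Disjoint t t'

/-- The center `C(S) = {c ∈ G : Sc ∈ T}` of a shape `S` with respect to a tiling `T`. -/
def tilingCenter {G : Type*} [Group G] (T : Set (Set G)) (S : Set G) : Set G :=
  {c : G | tileTranslate S c ∈ T}

/-- `T` is a finite tiling with set of shapes `Shapes`. -/
def IsFiniteTiling {G : Type*} [Group G] (T : Set (Set G)) (Shapes : Set (Set G)) : Prop :=
  IsTiling T ∧ Shapes.Finite ∧ (∀ S ∈ Shapes, S.Finite ∧ S.Nonempty) ∧
    ∀ t ∈ T, ∃ S ∈ Shapes, ∃ c : G, t = tileTranslate S c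

/-! ### Shifts and subshifts -/

/-- The full `G`-shift on `K^G`: `(σ g x) h = x (h g)`. -/
def shift (G K : Type*) [Group G] : G → (G → K) → (G → K) := fun g x h => x (h * g)

/-- A subshift is a closed shift-invariant subset of `K^G`. -/
def IsSubshift {G K : Type*} [Group G] [TopologicalSpace K] (M : Set (G → K)) : Prop :=
  IsClosed M ∧ ∀ g : G, ∀ x ∈ M, shift G K g x ∈ M

/-- A minimal subshift: a nonempty subshift in which every orbit is dense. -/
def IsMinimalSubshift {G K : Type*} [Group G] [TopologicalSpace K] (M : Set (G → K)) : Prop :=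
  M.Nonempty ∧ IsSubshift M ∧ ∀ x ∈ M, M ⊆ closure {y | ∃ g : G, y = shift G K g x}

/-! ### Group actions -/

/-- A continuous action of `G` on `X` given by `act : G → X → X`. -/
structure IsContAction {G X : Type*} [Group G] [TopologicalSpace X] (act : G → X → X) : Prop where
  one : ∀ x, act 1 x = x
  mul : ∀ g h x, act (g * h) x = act g (act h x)
  cont : ∀ g, Continuous (act g)

/-- The restriction of an action to an invariant subset (junk value outside). -/
noncomputable def restrictAct {G X : Type*} (act : G → X → X) (M : Set X) : G → M → M :=
  fun g x =>
    letI := Classical.propDecidable (act g (x : X) ∈ M)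
    if h : act g (x : X) ∈ M then ⟨act g (x : X), h⟩ else x

/-- A minimal subsystem: a nonempty closed invariant subset in which every orbit is dense. -/
def IsMinimalSubsystem {G X : Type*} [TopologicalSpace X] (act : G → X → X) (M : Set X) : Prop :=
  M.Nonempty ∧ IsClosed M ∧ (∀ g : G, ∀ x ∈ M, act g x ∈ M) ∧
    ∀ x ∈ M, M ⊆ closure {y | ∃ g : G, y = act g x}

/-! ### Compatible metrics -/

/-- `d` is a compatible metric on the topological space `X`. -/
structure IsCompatibleMetric (X : Type*) [TopologicalSpace X] (d : X → X → ℝ) : Prop where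
  refl : ∀ x, d x x = 0
  eq_of : ∀ {x y}, d x y = 0 → x = y
  symm : ∀ x y, d x y = d y x
  triangle : ∀ x y z, d x z ≤ d x y + d y z
  compatible : ∀ s : Set X, IsOpen s ↔ ∀ x ∈ s, ∃ ε > 0, {y | d x y < ε} ⊆ s

/-! ### Widim, polyhedra, mean dimension -/

/-- `f` is an `ε`-embedding with respect to the (pseudo)metric `d`. -/
def IsEpsEmbedding {X Y : Type*} [TopologicalSpace X] [TopologicalSpace Y]
    (d : X → X → ℝ) (ε : ℝ) (f : X → Y) : Prop :=
  Continuous f ∧ ∀ x y, f x = f y → d x y < ε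

/-- There is an `ε`-embedding of `X` into (the space of) a finite simplicial complex of
dimension at most `n` sitting in some Euclidean space. -/
def ExistsPolyEmbedding {X : Type*} [TopologicalSpace X] (d : X → X → ℝ) (ε : ℝ) (n : ℕ) : Prop :=
  ∃ (N : ℕ) (S : Geometry.SimplicialComplex ℝ (EuclideanSpace ℝ (Fin N))),
    S.faces.Finite ∧ (∀ s ∈ S.faces, s.card ≤ n + 1) ∧
    ∃ f : X → S.space, IsEpsEmbedding d ε f

/-- `Widim_ε(X,d)`: the least dimension of a (finite) polyhedron admitting an
`ε`-embedding of `X`. -/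
noncomputable def widim {X : Type*} [TopologicalSpace X] (d : X → X → ℝ) (ε : ℝ) : ℝ≥0∞ :=
  sInf {x : ℝ≥0∞ | ∃ n : ℕ, x = (n : ℝ≥0∞) ∧ ExistsPolyEmbedding d ε n}

/-- The dynamical metric `ρ_F(x,y) = max_{g ∈ F} ρ(gx,gy)`. -/
noncomputable def dynDist {G X : Type*} (act : G → X → X) (d : X → X → ℝ) (F : Finset G)
    (x y : X) : ℝ :=
  sSup ((fun g => d (act g x) (act g y)) '' (F : Set G))

/-- The mean dimension of the action `act` computed with the metric `d` and the Følner
sequence `F`: `lim_{ε→0} lim_n Widim_ε(X,ρ_{F n})/|F n|` (the limit in `ε` is a supremum by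
monotonicity, and the inner limit is a limsup). -/
noncomputable def mdimWith {G X : Type*} [Group G] [TopologicalSpace X]
    (act : G → X → X) (d : X → X → ℝ) (F : ℕ → Finset G) : ℝ≥0∞ :=
  ⨆ ε ∈ Set.Ioi (0 : ℝ),
    Filter.limsup (fun n => widim (dynDist act d (F n)) ε / ((F n).card : ℝ≥0∞)) Filter.atTop

/-- The action `act` has mean dimension `r`: for every compatible metric and every Følner
sequence the computed value is `r` (the value is independent of these choices). -/
def HasMdim {G X : Type*} [Group G] [TopologicalSpace X] (act : G → X → X) (r : ℝ≥0∞) : Prop :=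
  ∀ d : X → X → ℝ, IsCompatibleMetric X d →
    ∀ F : ℕ → Finset G, IsFolnerSeq F → mdimWith act d F = r

/-! ### Covering dimension -/

/-- The Lebesgue covering dimension of `X` is at most `n`: every open cover has an open
refinement of multiplicity at most `n+1`. -/
def CovDimLE (X : Type*) [TopologicalSpace X] (n : ℕ) : Prop :=
  ∀ U : Set (Set X), (∀ u ∈ U, IsOpen u) → ⋃₀ U = Set.univ →
    ∃ V : Set (Set X), (∀ v ∈ V, IsOpen v) ∧ ⋃₀ V = Set.univ ∧
      (∀ v ∈ V, ∃ u ∈ U, v ⊆ u) ∧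
      ∀ x : X, {v | v ∈ V ∧ x ∈ v}.Finite ∧ {v | v ∈ V ∧ x ∈ v}.ncard ≤ n + 1

/-- The Lebesgue covering dimension, as an extended nonnegative real. -/
noncomputable def covDim (X : Type*) [TopologicalSpace X] : ℝ≥0∞ :=
  sInf {x : ℝ≥0∞ | ∃ n : ℕ, x = (n : ℝ≥0∞) ∧ CovDimLE X n}

/-- `X` is finite-dimensional. -/
def TopFiniteDimensional (X : Type*) [TopologicalSpace X] : Prop := ∃ n : ℕ, CovDimLE X n

/-! ### Density -/

/-- The density `δ(J)` of a subset `J ⊆ G`: the supremum over all Følner sequences of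
`limsup_n |J ∩ F n| / |F n|`. -/
noncomputable def upperDensity (G : Type*) [Group G] (J : Set G) : ℝ≥0∞ :=
  ⨆ (F : ℕ → Finset G) (_ : IsFolnerSeq F),
    Filter.limsup (fun n =>
      letI : ∀ g : G, Decidable (g ∈ J) := fun g => Classical.propDecidable _
      (((F n).filter (fun g => g ∈ J)).card : ℝ≥0∞) / ((F n).card : ℝ≥0∞)) Filter.atTop


/-- For a finite tiling `T` of a countably infinite amenable group `G` and any
`ε > 0`, there are `δ > 0` and a nonempty finite `K ⊆ G` such that for every `g ∈ G` and every
`(K,δ)`-invariant nonempty finite `F ⊆ G`, the union of the `Tg`-tiles contained in `F` occupies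
a proportion larger than `1 - ε` of `F`. -/
theorem finite_tiling_covers_invariant_sets
    (G : Type) [Group G] [Countable G] [Infinite G] (hG : IsAmenable G)
    (T : Set (Set G)) (Shapes : Set (Set G)) (hT : IsFiniteTiling T Shapes) :
    ∀ ε : ℝ, 0 < ε → ∃ δ : ℝ, 0 < δ ∧ ∃ K : Finset G, K.Nonempty ∧
      ∀ g : G, ∀ F : Finset G, F.Nonempty → IsTInvariant K δ F →
        ((⋃₀ {t : Set G | (∃ t' ∈ T, t = tileTranslate t' g) ∧ t ⊆ (F : Set G)}).ncard : ℝ)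
            / (F.card : ℝ) > 1 - ε := by
  classical
  obtain ⟨⟨htiles, hcover, hdisj⟩, hShapesFin, hShapes, hrep⟩ := hT
  intro ε hε
  have hKfin : ((⋃₀ Shapes) ∪ {1} : Set G).Finite :=
    (Set.Finite.sUnion hShapesFin fun S hS => (hShapes S hS).1).union (Set.finite_singleton 1)
  set K : Finset G := hKfin.toFinset with hKdef
  have hSK : ∀ S ∈ Shapes, ∀ s ∈ S, s ∈ K := by
    intro S hS s hs
    simp only [hKdef, Set.Finite.mem_toFinset, Set.mem_union, Set.mem_sUnion]
    exact Or.inl ⟨S, hS, hs⟩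
  have h1K : (1 : G) ∈ K := by simp [hKdef]
  have hKne : K.Nonempty := ⟨1, h1K⟩
  have hKpos : (0:ℝ) < (K.card : ℝ) := by exact_mod_cast Finset.card_pos.mpr hKne
  refine ⟨ε / K.card, div_pos hε hKpos, K, hKne, ?_⟩
  intro g F hF hInv
  have hFpos : (0:ℝ) < (F.card : ℝ) := by exact_mod_cast Finset.card_pos.mpr hF
  set B := folnerBoundary K F with hBdef
  have hBfin : B.Finite := by
    apply Set.Finite.subset (Set.Finite.image2 (fun t b => t⁻¹ * b) K.finite_toSet F.finite_toSet)
    rintro b ⟨⟨t, ht, htb⟩, -⟩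
    exact ⟨t, ht, t * b, htb, by group⟩
  set U : Set G := ⋃₀ {t : Set G | (∃ t' ∈ T, t = tileTranslate t' g) ∧ t ⊆ (F : Set G)}
    with hUdef
  have hUF : U ⊆ (F : Set G) := by
    rintro x ⟨t, ⟨-, hsub⟩, hx⟩
    exact hsub hx
  have hkey : (F : Set G) \ U ⊆ Set.image2 (fun t b => t * b) (K : Set G) B := by
    rintro x ⟨hxF, hxU⟩
    have hx : x * g⁻¹ ∈ ⋃₀ T := by rw [hcover]; trivial
    obtain ⟨t', ht'T, hxt'⟩ := hx
    obtain ⟨S, hS, c, rfl⟩ := hrep t' ht'T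
    obtain ⟨s₀, hs₀S, hs₀⟩ := hxt'
    have hs₀' : s₀ * c = x * g⁻¹ := hs₀
    have hx0 : s₀ * (c * g) = x := by rw [← mul_assoc, hs₀']; group
    have hnot : ¬ (tileTranslate (tileTranslate S c) g ⊆ (F : Set G)) := by
      intro hsub
      exact hxU ⟨_, ⟨⟨tileTranslate S c, ht'T, rfl⟩, hsub⟩,
        ⟨s₀ * c, ⟨s₀, hs₀S, rfl⟩, by show s₀ * c * g = x; rw [mul_assoc]; exact hx0⟩⟩
    obtain ⟨y, hy, hynF⟩ := Set.not_subset.mp hnot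
    obtain ⟨z, ⟨s₁, hs₁S, rfl⟩, rfl⟩ := hy
    have hcgB : c * g ∈ B := by
      refine ⟨⟨s₀, hSK S hS s₀ hs₀S, ?_⟩, ⟨s₁, hSK S hS s₁ hs₁S, ?_⟩⟩
      · rw [hx0]; exact hxF
      · rw [← mul_assoc]
        simpa using hynF
    exact ⟨s₀, hSK S hS s₀ hs₀S, c * g, hcgB, hx0⟩
  have hUfin : U.Finite := F.finite_toSet.subset hUF
  have hcard1 : ((F:Set G) \ U).ncard + U.ncard = F.card := by
    rw [← Set.ncard_coe_finset F]
    exact Set.ncard_diff_add_ncard_of_subset hUF F.finite_toSet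
  have hcard2 : ((F:Set G) \ U).ncard ≤ K.card * B.ncard := by
    have himg : Set.image2 (fun t b => t * b) (K : Set G) B =
        ↑(Finset.image₂ (fun t b => t * b) K hBfin.toFinset) := by
      rw [Finset.coe_image₂, hBfin.coe_toFinset]
    calc ((F:Set G) \ U).ncard
        ≤ (Set.image2 (fun t b => t * b) (K : Set G) B).ncard :=
          Set.ncard_le_ncard hkey (K.finite_toSet.image2 _ hBfin)
      _ ≤ K.card * B.ncard := by
          rw [himg, Set.ncard_coe_finset, Set.ncard_eq_toFinset_card B hBfin]
          exact Finset.card_image₂_le _ _ _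
  -- real arithmetic
  have hInv' : (B.ncard : ℝ) < ε / K.card * F.card := (div_lt_iff₀ hFpos).mp hInv
  have hmul : (K.card : ℝ) * (ε / K.card * F.card) = ε * F.card := by
    field_simp
  have hlt : (((F:Set G) \ U).ncard : ℝ) < ε * F.card := by
    have h2 : (((F:Set G) \ U).ncard : ℝ) ≤ (K.card : ℝ) * B.ncard := by exact_mod_cast hcard2
    have h3 : (K.card : ℝ) * B.ncard < (K.card : ℝ) * (ε / K.card * F.card) :=
      (mul_lt_mul_iff_right₀ hKpos).mpr hInv'
    linarith [hmul ▸ h3]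
  have h1 : (((F:Set G) \ U).ncard : ℝ) + U.ncard = F.card := by exact_mod_cast hcard1
  rw [gt_iff_lt, lt_div_iff₀ hFpos]
  nlinarith
end
end

section
/- Let G be a countably infinite amenable group and T a syndetic finite tiling of G with set of shapes S_T. Then for every n ∈ ℕ there exist a nonempty finite subset K of G and ε > 0 such that for every shape S ∈ S_T and every (K, ε)-invariant nonempty finite subset F of G, F contains at least n T-tiles of the shape S (i.e., there are at least n elements c ∈ C(S) with Sc ⊆ F). -/
open Filter Set
open scoped ENNReal

noncomputable section

open scoped Pointwise

/-- For a syndetic finite tiling `T` of a countably infinite amenable group `G`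
with shape set `Shapes`, and any `n ∈ ℕ`, there are a nonempty finite `K ⊆ G` and `ε > 0` such
that every `(K,ε)`-invariant nonempty finite `F ⊆ G` contains at least `n` `T`-tiles of every
shape `S ∈ Shapes`. -/
theorem syndetic_tiling_many_tiles_in_invariant_sets
    (G : Type) [Group G] [Countable G] [Infinite G] (hG : IsAmenable G)
    (T : Set (Set G)) (Shapes : Set (Set G)) (hT : IsFiniteTiling T Shapes)
    (hsyn : ∀ S ∈ Shapes, IsSyndetic (tilingCenter T S)) :
    ∀ n : ℕ, ∃ K : Finset G, K.Nonempty ∧ ∃ ε : ℝ, 0 < ε ∧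
      ∀ S ∈ Shapes, ∀ F : Finset G, F.Nonempty → IsTInvariant K ε F →
        n ≤ {c : G | c ∈ tilingCenter T S ∧ tileTranslate S c ⊆ (F : Set G)}.ncard := by
  classical
  intro n
  obtain ⟨hTil, hShFin, hShProp, hTshape⟩ := hT
  have hsyn' : ∀ S : Set G, ∃ A : Finset G, S ∈ Shapes →
      ∀ g : G, ∃ f ∈ A, ∃ c ∈ tilingCenter T S, g = f * c := by
    intro S
    by_cases h : S ∈ Shapes
    · obtain ⟨A, hA⟩ := hsyn S h
      exact ⟨A, fun _ => hA⟩
    · exact ⟨∅, fun h' => absurd h' h⟩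
  choose A hA using hsyn'
  set Ssh : Finset (Set G) := hShFin.toFinset with hSshdef
  set sfin : Set G → Finset G := fun S =>
    if h : S ∈ Shapes then (hShProp S h).1.toFinset else ∅ with hsfindef
  set K0 : Finset G := Ssh.biUnion (fun S => sfin S * (A S)⁻¹) with hK0def
  set Amax : ℕ := max (Ssh.sup fun S => (A S).card) 1 with hAmaxdef
  have hAmax1 : 1 ≤ Amax := le_max_right _ _
  obtain ⟨K, hK0K, hKcard⟩ := Infinite.exists_superset_card_eq (insert (1:G) K0)
      (max (insert (1:G) K0).card (2 * ((n+1) * Amax))) (le_max_left _ _)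
  have h1K : (1:G) ∈ K := hK0K (Finset.mem_insert_self _ _)
  have hKbig : 2 * ((n+1) * Amax) ≤ K.card := hKcard ▸ le_max_right _ _
  refine ⟨K, ⟨1, h1K⟩, 1/2, by norm_num, ?_⟩
  intro S hS F hF hinv
  have hSmem : S ∈ Ssh := hShFin.mem_toFinset.mpr hS
  -- the "core" of F
  set D : Finset G := F.filter (fun g => ∀ t ∈ K, t * g ∈ F) with hDdef
  have hDF : D ⊆ F := Finset.filter_subset _ _
  -- boundary is finite
  have hBfin : (folnerBoundary K F).Finite := by
    apply Set.Finite.subset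
      (Set.Finite.biUnion K.finite_toSet
        (fun t _ => F.finite_toSet.preimage ((mul_right_injective t).injOn)))
    rintro g ⟨⟨t, ht, htg⟩, -⟩
    exact Set.mem_biUnion ht htg
  -- F \ D sits in the boundary
  have hsub : (↑(F \ D) : Set G) ⊆ folnerBoundary K F := by
    intro g hg
    rw [Finset.coe_sdiff] at hg
    obtain ⟨hgF, hgD⟩ := hg
    have hgF' : g ∈ F := hgF
    have : ¬ (∀ t ∈ K, t * g ∈ F) := by
      intro h
      exact hgD (Finset.mem_filter.mpr ⟨hgF', h⟩)
    push_neg at this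
    obtain ⟨t, ht, htg⟩ := this
    exact ⟨⟨1, h1K, by simpa using hgF'⟩, ⟨t, ht, htg⟩⟩
  have hcard_sdiff : (F \ D).card ≤ (folnerBoundary K F).ncard := by
    rw [← Set.ncard_coe_finset]
    exact Set.ncard_le_ncard hsub hBfin
  have hF0 : (0:ℝ) < F.card := by exact_mod_cast hF.card_pos
  have hB : ((folnerBoundary K F).ncard : ℝ) < F.card / 2 := by
    rw [IsTInvariant, div_lt_iff₀ hF0] at hinv
    linarith
  have hsplit : ((F \ D).card : ℝ) + D.card = F.card := by
    exact_mod_cast congrArg Nat.cast (Finset.card_sdiff_add_card_eq_card hDF)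
  have hDbig : (F.card : ℝ) / 2 < D.card := by
    have : ((F \ D).card : ℝ) ≤ (folnerBoundary K F).ncard := by exact_mod_cast hcard_sdiff
    linarith
  -- D is nonempty, hence |F| ≥ |K|
  have hDne : D.Nonempty := by
    rw [← Finset.card_pos]
    have h0 : (0:ℝ) < D.card := lt_trans (by positivity) hDbig
    exact_mod_cast h0
  obtain ⟨g0, hg0⟩ := hDne
  have hg0' : ∀ t ∈ K, t * g0 ∈ F := (Finset.mem_filter.mp hg0).2
  have hKF : K.card ≤ F.card := by
    have himg : K.image (fun t => t * g0) ⊆ F := by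
      intro x hx
      obtain ⟨t, ht, rfl⟩ := Finset.mem_image.mp hx
      exact hg0' t ht
    calc K.card = (K.image (fun t => t * g0)).card :=
          (Finset.card_image_of_injective K (mul_left_injective g0)).symm
      _ ≤ F.card := Finset.card_le_card himg
  -- choose centers
  choose f hf c hc hfc using hA S hS
  set Cs : Finset G := D.image c with hCsdef
  -- each tile of a chosen center is inside F
  have htile : ∀ g ∈ D, c g ∈ tilingCenter T S ∧ tileTranslate S (c g) ⊆ (F : Set G) := by
    intro g hg
    refine ⟨hc g, ?_⟩
    rintro x ⟨s, hs, rfl⟩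
    have hcg : c g = (f g)⁻¹ * g := eq_inv_mul_iff_mul_eq.mpr (hfc g).symm
    have hx : s * c g = (s * (f g)⁻¹) * g := by rw [hcg]; group
    have hsmem : s ∈ sfin S := by
      rw [hsfindef]
      simp only [dif_pos hS]
      exact (hShProp S hS).1.mem_toFinset.mpr hs
    have ht : s * (f g)⁻¹ ∈ K := by
      apply hK0K
      apply Finset.mem_insert_of_mem
      rw [hK0def]
      exact Finset.mem_biUnion.mpr ⟨S, hSmem, Finset.mul_mem_mul hsmem (Finset.inv_mem_inv (hf g))⟩
    have := (Finset.mem_filter.mp hg).2 _ ht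
    show s * c g ∈ (F : Set G)
    rw [hx]
    exact_mod_cast this
  -- fiber bound
  have hfiber : D.card ≤ Amax * Cs.card := by
    apply Finset.card_le_mul_card_image
    intro b hb
    have : D.filter (fun g => c g = b) ⊆ (A S).image (fun a => a * b) := by
      intro g hg
      obtain ⟨hgD, hgb⟩ := Finset.mem_filter.mp hg
      exact Finset.mem_image.mpr ⟨f g, hf g, by rw [← hgb, ← hfc g]⟩
    calc (D.filter (fun g => c g = b)).card ≤ ((A S).image (fun a => a * b)).card :=
          Finset.card_le_card this
      _ ≤ (A S).card := Finset.card_image_le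
      _ ≤ Amax := by
          rw [hAmaxdef]
          exact le_trans (Finset.le_sup (f := fun S => (A S).card) hSmem) (le_max_left _ _)
  -- numerical conclusion: n < Cs.card
  have hnum : (n : ℝ) < Cs.card := by
    have h1 : ((n+1 : ℕ) : ℝ) * Amax < D.card := by
      have hK2 : (2:ℝ) * ((n+1) * Amax) ≤ K.card := by exact_mod_cast hKbig
      have hKFr : (K.card : ℝ) ≤ F.card := by exact_mod_cast hKF
      push_cast at hK2 ⊢
      linarith
    have h2 : (D.card : ℝ) ≤ Amax * Cs.card := by exact_mod_cast hfiber
    have hAm : (1:ℝ) ≤ Amax := by exact_mod_cast hAmax1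
    have h3 : (Amax:ℝ) * ((n:ℝ)+1) < (Amax:ℝ) * Cs.card := by push_cast at h1; linarith
    have h4 := lt_of_mul_lt_mul_left h3 (by linarith : (0:ℝ) ≤ (Amax:ℝ))
    linarith
  have hn : n ≤ Cs.card := by exact_mod_cast hnum.le
  -- target set is finite and contains Cs
  obtain ⟨s0, hs0⟩ := (hShProp S hS).2
  have hTgtfin : {c0 : G | c0 ∈ tilingCenter T S ∧ tileTranslate S c0 ⊆ (F : Set G)}.Finite := by
    apply Set.Finite.subset (F.finite_toSet.preimage ((mul_right_injective s0).injOn))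
    rintro c0 ⟨-, hc0⟩
    exact hc0 ⟨s0, hs0, rfl⟩
  have hCsub : (↑Cs : Set G) ⊆
      {c0 : G | c0 ∈ tilingCenter T S ∧ tileTranslate S c0 ⊆ (F : Set G)} := by
    intro c0 hc0
    obtain ⟨g, hg, rfl⟩ := Finset.mem_image.mp hc0
    exact htile g hg
  calc n ≤ Cs.card := hn
    _ = (↑Cs : Set G).ncard := (Set.ncard_coe_finset _).symm
    _ ≤ _ := Set.ncard_le_ncard hCsub hTgtfin
end
end
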